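/- For a word x in Z_m^n chosen uniformly at random, the expected value of the sum of the lengths of all maximal alternating segments of x equals n + (n-2)(m-1)(m-2)/m^2. -/

import Mathlib

open Finset

/-- The (0-indexed, inclusive) segment `x_i,…,x_j` is alternating, i.e. of the
form `abab…` : adjacent symbols differ and the segment has period 2. -/
def IsAltOn {m : ℕ} (x : ℕ → Fin m) (i j : ℕ) : Prop :=
  (∀ k ∈ Finset.Ico i j, x k ≠ x (k + 1)) ∧ ∀ k ∈ Finset.Ico i (j - 1), x k = x (k + 2)

instance {m : ℕ} (x : ℕ → Fin m) (i j : ℕ) : Decidable (IsAltOn x i j) :=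
  inferInstanceAs (Decidable (_ ∧ _))

/-- The set of (0-indexed, inclusive) index pairs of maximal alternating segments
of the word `x_0,…,x_{n-1}`. -/
def altSegs {m : ℕ} (n : ℕ) (x : ℕ → Fin m) : Finset (ℕ × ℕ) :=
  (Finset.range n ×ˢ Finset.range n).filter (fun p => p.1 ≤ p.2 ∧ IsAltOn x p.1 p.2 ∧
    (p.1 = 0 ∨ ¬ IsAltOn x (p.1 - 1) p.2) ∧ (p.2 = n - 1 ∨ ¬ IsAltOn x p.1 (p.2 + 1)))

/-- `a(x)` : the number of maximal alternating segments of `x_0,…,x_{n-1}`. -/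
def aCount {m : ℕ} (n : ℕ) (x : ℕ → Fin m) : ℕ := (altSegs n x).card

/-- `∑ s_i` : the sum of the lengths of the maximal alternating segments. -/
def sumLen {m : ℕ} (n : ℕ) (x : ℕ → Fin m) : ℕ := ∑ p ∈ altSegs n x, (p.2 - p.1 + 1)

/-- `∑ s_i²` : the sum of the squares of the lengths of the maximal alternating segments. -/
def sumLenSq {m : ℕ} (n : ℕ) (x : ℕ → Fin m) : ℕ := ∑ p ∈ altSegs n x, (p.2 - p.1 + 1) ^ 2

/-- `ρ(x)` : the number of runs of the word `x_0,…,x_{n-1}`. -/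
def rho {m : ℕ} (n : ℕ) (x : ℕ → Fin m) : ℕ :=
  1 + ((Finset.range (n - 1)).filter (fun i => x i ≠ x (i + 1))).card

/-- `h(x)` : the length of the first maximal alternating segment of `x_0,…,x_{n-1}`. -/
def headAlt {m : ℕ} (n : ℕ) (x : ℕ → Fin m) : ℕ :=
  ((Finset.range n).filter (fun j => IsAltOn x 0 j)).card

/-- `t(x)` : the length of the last maximal alternating segment of `x_0,…,x_{n-1}`. -/
def tailAlt {m : ℕ} (n : ℕ) (x : ℕ → Fin m) : ℕ :=
  ((Finset.range n).filter (fun j => IsAltOn x (n - 1 - j) (n - 1))).card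

/-- Extend a word of length `n` to a function `ℕ → Fin m` (junk value `0` beyond `n`). -/
def extWord {m : ℕ} (n : ℕ) (hm : 0 < m) (y : Fin n → Fin m) : ℕ → Fin m :=
  fun i => if h : i < n then y ⟨i, h⟩ else ⟨0, hm⟩

/-- The FLL ball of radius 1 around `x` : all words `y` of length `n` sharing with `x`
a common subsequence of length `n - 1` (equivalently, `d_l(x,y) ≤ 1`). -/
def L1ball {m : ℕ} (n : ℕ) (x : Fin n → Fin m) : Set (Fin n → Fin m) :=
  {y | ∃ z : List (Fin m), z.length = n - 1 ∧ z.Sublist (List.ofFn x) ∧ z.Sublist (List.ofFn y)}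

/-- `|L_1(x)|` : the size of the FLL ball of radius 1 around `x`. -/
noncomputable def L1size {m : ℕ} (n : ℕ) (x : Fin n → Fin m) : ℕ := (L1ball n x).ncard

/-- `f_n(y)` for binary words `y` of length `len` : `ρ(y)·n - (1/2)∑ s_j²`. -/
noncomputable def fB (n len : ℕ) (y : ℕ → Fin 2) : ℝ :=
  (rho len y : ℝ) * n - (sumLenSq len y : ℝ) / 2

/-- `f_{m,n}(y)` for words `y` of length `len` over `Z_m` :
`ρ(y)(mn-n-1) - (1/2)∑ s_j² + (3/2)∑ s_j - a(y)`. -/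
noncomputable def fM (m n len : ℕ) (y : ℕ → Fin m) : ℝ :=
  (rho len y : ℝ) * ((m : ℝ) * n - n - 1) - (sumLenSq len y : ℝ) / 2
    + 3 / 2 * (sumLen len y : ℝ) - (aCount len y : ℝ)

variable {m : ℕ} (x : ℕ → Fin m)

lemma isAltOn_self (k : ℕ) : IsAltOn x k k := by
  constructor <;> intro l hl <;> simp only [Finset.mem_Ico] at hl <;> omega

lemma isAltOn_mono {i j i' j' : ℕ} (h : IsAltOn x i j) (hi : i ≤ i') (hj : j' ≤ j) :
    IsAltOn x i' j' := by
  obtain ⟨h1, h2⟩ := h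
  refine ⟨fun k hk => h1 k ?_, fun k hk => h2 k ?_⟩ <;> simp only [Finset.mem_Ico] at hk ⊢ <;> omega

lemma isAltOn_glue {i k j : ℕ} (hik : IsAltOn x i k) (hkj : IsAltOn x k j)
    (hi : i ≤ k) (hj : k ≤ j) (hmid : i = k ∨ j = k ∨ x (k - 1) = x (k + 1)) :
    IsAltOn x i j := by
  constructor
  · intro l hl
    simp only [Finset.mem_Ico] at hl
    rcases lt_or_ge l k with h | h
    · exact hik.1 l (by simp only [Finset.mem_Ico]; omega)
    · exact hkj.1 l (by simp only [Finset.mem_Ico]; omega)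
  · intro l hl
    simp only [Finset.mem_Ico] at hl
    rcases lt_or_ge (l + 1) k with h | h
    · exact hik.2 l (by simp only [Finset.mem_Ico]; omega)
    · rcases eq_or_lt_of_le h with h' | h'
      · rcases hmid with h'' | h'' | h''
        · omega
        · omega
        · have hl1 : l = k - 1 := by omega
          subst hl1
          have : k - 1 + 2 = k + 1 := by omega
          rw [this]; exact h''
      · exact hkj.2 l (by simp only [Finset.mem_Ico]; omega)

/-- least left endpoint of an alternating segment ending at `k` -/
def Lend (k : ℕ) : ℕ := Nat.find (⟨k, isAltOn_self x k⟩ : ∃ i, IsAltOn x i k)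

/-- greatest right endpoint `≤ n-1` of an alternating segment starting at `k` -/
def Rend (n k : ℕ) : ℕ := Nat.findGreatest (fun j => IsAltOn x k j) (n - 1)

lemma Lend_le (k : ℕ) : Lend x k ≤ k := Nat.find_min' _ (isAltOn_self x k)
lemma Lend_spec (k : ℕ) : IsAltOn x (Lend x k) k :=
  Nat.find_spec (⟨k, isAltOn_self x k⟩ : ∃ i, IsAltOn x i k)
lemma Lend_min {i k : ℕ} (h : IsAltOn x i k) : Lend x k ≤ i := Nat.find_min' _ h
lemma Lend_not {i k : ℕ} (h : i < Lend x k) : ¬ IsAltOn x i k :=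
  Nat.find_min (⟨k, isAltOn_self x k⟩ : ∃ i, IsAltOn x i k) h

variable {n : ℕ}

lemma Rend_ge {k : ℕ} (hk : k < n) : k ≤ Rend x n k :=
  Nat.le_findGreatest (by omega) (isAltOn_self x k)
lemma Rend_spec {k : ℕ} (hk : k < n) : IsAltOn x k (Rend x n k) :=
  Nat.findGreatest_spec (m := k) (by omega) (isAltOn_self x k)
lemma Rend_le (k : ℕ) : Rend x n k ≤ n - 1 := Nat.findGreatest_le _
lemma Rend_max {k j : ℕ} (h : Rend x n k < j) (hj : j ≤ n - 1) : ¬ IsAltOn x k j :=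
  Nat.findGreatest_is_greatest h hj

/-- the key characterization: maximal alternating segments through position `k` -/
lemma segs_through (hk : k < n) :
    (altSegs n x).filter (fun p => p.1 ≤ k ∧ k ≤ p.2) =
      if 0 < k ∧ k + 1 < n ∧ x (k-1) ≠ x k ∧ x k ≠ x (k+1) ∧ x (k-1) ≠ x (k+1)
      then {(Lend x k, k), (k, Rend x n k)} else {(Lend x k, Rend x n k)} := by
  have hmem : ∀ p : ℕ × ℕ, p ∈ altSegs n x ↔
      p.1 < n ∧ p.2 < n ∧ p.1 ≤ p.2 ∧ IsAltOn x p.1 p.2 ∧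
      (p.1 = 0 ∨ ¬ IsAltOn x (p.1 - 1) p.2) ∧ (p.2 = n - 1 ∨ ¬ IsAltOn x p.1 (p.2 + 1)) := by
    intro p
    simp [altSegs, Finset.mem_filter, Finset.mem_product, Finset.mem_range]
    tauto
  ext p
  rw [Finset.mem_filter, hmem]
  -- general facts
  have hLle := Lend_le x k
  have hLspec := Lend_spec x k
  have hRge := Rend_ge x hk
  have hRspec := Rend_spec x hk
  have hRle := Rend_le x (n := n) k
  have case_eq1 : x (k-1) = x k → 0 < k → Lend x k = k := by
    intro he hk0
    by_contra hne
    have hlt : Lend x k < k := lt_of_le_of_ne hLle hne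
    have hmem' : k - 1 ∈ Finset.Ico (Lend x k) k := by simp only [Finset.mem_Ico]; omega
    have hneq := hLspec.1 (k-1) hmem'
    have h3 : k - 1 + 1 = k := by omega
    rw [h3] at hneq
    exact hneq he
  have case_eq2 : x k = x (k+1) → Rend x n k = k := by
    intro he
    by_contra hne
    have hlt : k < Rend x n k := lt_of_le_of_ne hRge (fun h => hne h.symm)
    exact (hRspec.1 k (by simp only [Finset.mem_Ico]; omega)) he
  have hLpred : x (k-1) ≠ x k → 0 < k → Lend x k ≤ k - 1 := by
    intro he hk0
    refine Lend_min x ⟨fun l hl => ?_, fun l hl => ?_⟩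
    · simp only [Finset.mem_Ico] at hl
      have : l = k - 1 := by omega
      subst this
      have h3 : k - 1 + 1 = k := by omega
      rw [h3]; exact he
    · simp only [Finset.mem_Ico] at hl; omega
  have hRsucc : x k ≠ x (k+1) → k + 1 ≤ n - 1 → k + 1 ≤ Rend x n k := by
    intro he hkn
    refine Nat.le_findGreatest hkn ⟨fun l hl => ?_, fun l hl => ?_⟩
    · simp only [Finset.mem_Ico] at hl
      have : l = k := by omega
      subst this; exact he
    · simp only [Finset.mem_Ico] at hl; omega
  constructor
  · rintro ⟨⟨h1n, h2n, h12, halt, hlmax, hrmax⟩, hk1, hk2⟩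
    -- p.1 = Lend unless blocked; p.2 = Rend unless blocked
    have hik : IsAltOn x p.1 k := isAltOn_mono x halt le_rfl hk2
    have hkj : IsAltOn x k p.2 := isAltOn_mono x halt hk1 le_rfl
    have hLlep : Lend x k ≤ p.1 := Lend_min x hik
    have hpleR : p.2 ≤ Rend x n k := Nat.le_findGreatest (by omega) hkj
    -- (B) : p.1 = Lend ∨ (p.2 ≠ k ∧ x (k-1) ≠ x (k+1))
    have hB : p.1 = Lend x k ∨ (p.2 ≠ k ∧ x (k-1) ≠ x (k+1)) := by
      by_cases hiL : p.1 = Lend x k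
      · exact Or.inl hiL
      · right
        have hi1 : 0 < p.1 := by omega
        have hprev : IsAltOn x (p.1 - 1) k := isAltOn_mono x hLspec (by omega) le_rfl
        have hnot : ¬ IsAltOn x (p.1 - 1) p.2 := by
          rcases hlmax with h | h
          · omega
          · exact h
        constructor
        · intro hjk
          exact hnot (hjk ▸ hprev)
        · intro heq
          exact hnot (isAltOn_glue x hprev hkj (by omega) hk2 (Or.inr (Or.inr heq)))
    -- (C) : p.2 = Rend ∨ (p.1 ≠ k ∧ x (k-1) ≠ x (k+1))
    have hC : p.2 = Rend x n k ∨ (p.1 ≠ k ∧ x (k-1) ≠ x (k+1)) := by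
      by_cases hjR : p.2 = Rend x n k
      · exact Or.inl hjR
      · right
        have hj1 : p.2 < Rend x n k := by omega
        have hnext : IsAltOn x k (p.2 + 1) := isAltOn_mono x hRspec le_rfl (by omega)
        have hnot : ¬ IsAltOn x p.1 (p.2 + 1) := by
          rcases hrmax with h | h
          · omega
          · exact h
        constructor
        · intro hik'
          exact hnot (hik' ▸ hnext)
        · intro heq
          exact hnot (isAltOn_glue x hik hnext hk1 (by omega) (Or.inr (Or.inr heq)))
    by_cases hc : 0 < k ∧ k + 1 < n ∧ x (k-1) ≠ x k ∧ x k ≠ x (k+1) ∧ x (k-1) ≠ x (k+1)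
    · rw [if_pos hc]
      simp only [Finset.mem_insert, Finset.mem_singleton]
      -- distinct case: interior glue impossible
      have hnoglue : ¬ (p.1 < k ∧ k < p.2) := by
        rintro ⟨h1, h2⟩
        have hmid := halt.2 (k - 1) (by simp only [Finset.mem_Ico]; omega)
        have h3 : k - 1 + 2 = k + 1 := by omega
        rw [h3] at hmid
        exact hc.2.2.2.2 hmid
      rcases eq_or_lt_of_le hk2 with hjk | hjk
      · -- p.2 = k : left endpoint is Lend
        left
        rcases hB with h | h
        · exact Prod.ext h hjk.symm
        · exact absurd hjk.symm h.1
      · -- k < p.2, so p.1 = k, p.2 = Rend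
        have hik' : p.1 = k := by
          rcases eq_or_lt_of_le hk1 with h | h
          · exact h
          · exact absurd ⟨h, hjk⟩ hnoglue
        right
        rcases hC with h | h
        · exact Prod.ext hik' h
        · exact absurd hik' h.1
    · rw [if_neg hc]
      simp only [Finset.mem_singleton]
      -- not-distinct / boundary case : p = (Lend, Rend)
      push_neg at hc
      -- helper equalities in degenerate cases
      -- establish p.1 = Lend and p.2 = Rend
      by_cases hk0 : k = 0
      · subst hk0
        have h1 : p.1 = 0 := by omega
        have hL0 : Lend x 0 = 0 := by omega
        rcases hC with h | h
        · exact Prod.ext (by omega) h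
        · exact absurd (by omega) h.1
      · by_cases hkn : k + 1 = n
        · -- k = n - 1
          have hj : p.2 = k := by omega
          have hR : Rend x n k = k := by omega
          rcases hB with h | h
          · exact Prod.ext h (by omega)
          · exact absurd hj h.1
        · -- 0 < k, k+1 < n, and one of the equalities holds
          have heqs : x (k-1) = x k ∨ x k = x (k+1) ∨ x (k-1) = x (k+1) := by
            by_cases e1 : x (k-1) = x k
            · exact Or.inl e1
            by_cases e2 : x k = x (k+1)
            · exact Or.inr (Or.inl e2)
            exact Or.inr (Or.inr (hc (by omega) (by omega) e1 e2))
          rcases heqs with he | he | he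
          · have hL : Lend x k = k := case_eq1 he (by omega)
            have h1 : p.1 = k := by omega
            rcases hC with h | h
            · exact Prod.ext (by omega) h
            · exact absurd h1 h.1
          · have hR : Rend x n k = k := case_eq2 he
            have hj : p.2 = k := by omega
            rcases hB with h | h
            · exact Prod.ext h (by omega)
            · exact absurd hj h.1
          · rcases hB with h | h
            · rcases hC with h' | h'
              · exact Prod.ext h h'
              · exact absurd he (fun _ => h'.2 he)
            · exact absurd he (fun _ => h.2 he)
  · -- reverse direction
    intro hp
    by_cases hc : 0 < k ∧ k + 1 < n ∧ x (k-1) ≠ x k ∧ x k ≠ x (k+1) ∧ x (k-1) ≠ x (k+1)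
    · rw [if_pos hc] at hp
      obtain ⟨hk0, hkn, e1, e2, e3⟩ := hc
      have hL1 : Lend x k ≤ k - 1 := hLpred e1 hk0
      have hR1 : k + 1 ≤ Rend x n k := hRsucc e2 (by omega)
      simp only [Finset.mem_insert, Finset.mem_singleton] at hp
      rcases hp with hp | hp
      · subst hp
        dsimp only
        refine ⟨⟨by omega, by omega, by omega, hLspec, ?_, ?_⟩, by omega, by omega⟩
        · by_cases h0 : Lend x k = 0
          · exact Or.inl h0
          · exact Or.inr (Lend_not x (by omega))
        · refine Or.inr (fun h => ?_)
          have := h.2 (k-1) (by simp only [Finset.mem_Ico]; omega)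
          have h3 : k - 1 + 2 = k + 1 := by omega
          rw [h3] at this
          exact e3 this
      · subst hp
        dsimp only
        refine ⟨⟨by omega, by omega, by omega, hRspec, ?_, ?_⟩, by omega, by omega⟩
        · refine Or.inr (fun h => ?_)
          have := h.2 (k-1) (by simp only [Finset.mem_Ico]; omega)
          have h3 : k - 1 + 2 = k + 1 := by omega
          rw [h3] at this
          exact e3 this
        · by_cases hRn : Rend x n k = n - 1
          · exact Or.inl hRn
          · exact Or.inr (Rend_max (n := n) x (by omega) (by omega))
    · rw [if_neg hc] at hp
      simp only [Finset.mem_singleton] at hp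
      subst hp
      dsimp only
      have hmid : Lend x k = k ∨ Rend x n k = k ∨ x (k-1) = x (k+1) := by
        by_cases hk0 : k = 0
        · exact Or.inl (by omega)
        by_cases hkn : k + 1 = n
        · exact Or.inr (Or.inl (by omega))
        push_neg at hc
        by_cases e1 : x (k-1) = x k
        · exact Or.inl (case_eq1 e1 (by omega))
        by_cases e2 : x k = x (k+1)
        · exact Or.inr (Or.inl (case_eq2 e2))
        exact Or.inr (Or.inr (hc (by omega) (by omega) e1 e2))
      have halt : IsAltOn x (Lend x k) (Rend x n k) :=
        isAltOn_glue x hLspec hRspec hLle hRge hmid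
      refine ⟨⟨by omega, by omega, by omega, halt, ?_, ?_⟩, by omega, by omega⟩
      · by_cases h0 : Lend x k = 0
        · exact Or.inl h0
        · refine Or.inr (fun h => ?_)
          exact Lend_not x (show Lend x k - 1 < Lend x k by omega)
            (isAltOn_mono x h le_rfl hRge)
      · by_cases hRn : Rend x n k = n - 1
        · exact Or.inl hRn
        · refine Or.inr (fun h => ?_)
          exact Rend_max (n := n) x (show Rend x n k < Rend x n k + 1 by omega) (by omega)
            (isAltOn_mono x h hLle le_rfl)

lemma fiber_card {n m : ℕ} (a b c : Fin n) (hab : a ≠ b) (hac : a ≠ c) (hbc : b ≠ c)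
    (u v w : Fin m) :
    ((univ : Finset (Fin n → Fin m)).filter
      (fun y => y a = u ∧ y b = v ∧ y c = w)).card = m ^ (n - 3) := by
  have e : {y : Fin n → Fin m // y a = u ∧ y b = v ∧ y c = w} ≃
      ({i : Fin n // i ≠ a ∧ i ≠ b ∧ i ≠ c} → Fin m) :=
    { toFun := fun y i => y.1 i.1
      invFun := fun g =>
        ⟨fun i => if h1 : i = a then u else if h2 : i = b then v else if h3 : i = c then w
          else g ⟨i, h1, h2, h3⟩, by
            refine ⟨by simp, ?_, ?_⟩
            · simp [Ne.symm hab]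
            · simp [Ne.symm hac, Ne.symm hbc]⟩
      left_inv := fun ⟨y, h1, h2, h3⟩ => by
        ext i
        by_cases e1 : i = a
        · subst e1; simp [h1]
        by_cases e2 : i = b
        · subst e2; simp [e1, h2]
        by_cases e3 : i = c
        · subst e3; simp [e1, e2, h3]
        simp [e1, e2, e3]
      right_inv := fun g => by
        ext i
        obtain ⟨i, h1, h2, h3⟩ := i
        simp [h1, h2, h3] }
  have h1 := Fintype.card_congr e
  rw [Fintype.card_subtype] at h1
  rw [h1, Fintype.card_fun, Fintype.card_fin, Fintype.card_subtype]
  congr 1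
  have : (univ : Finset (Fin n)).filter (fun i => i ≠ a ∧ i ≠ b ∧ i ≠ c) =
      univ \ {a, b, c} := by
    ext i; simp [and_assoc]
  rw [this, card_sdiff_of_subset (by simp)]
  simp only [card_univ, Fintype.card_fin]
  congr 1
  rw [card_insert_of_notMem (by simp [hab, hac]), card_insert_of_notMem (by simp [hbc]),
    card_singleton]

lemma triple_card {m : ℕ} :
    ((univ : Finset (Fin m × Fin m × Fin m)).filter
      (fun t => t.1 ≠ t.2.1 ∧ t.2.1 ≠ t.2.2 ∧ t.1 ≠ t.2.2)).card = m * (m-1) * (m-2) := by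
  classical
  rw [Finset.card_filter]
  calc ∑ t ∈ (univ : Finset (Fin m × Fin m × Fin m)),
        (if t.1 ≠ t.2.1 ∧ t.2.1 ≠ t.2.2 ∧ t.1 ≠ t.2.2 then 1 else 0)
      = ∑ u : Fin m, ∑ q : Fin m × Fin m,
          (if u ≠ q.1 ∧ q.1 ≠ q.2 ∧ u ≠ q.2 then 1 else 0) := Fintype.sum_prod_type _
    _ = ∑ u : Fin m, ∑ v : Fin m, ∑ w : Fin m,
          (if u ≠ v ∧ v ≠ w ∧ u ≠ w then 1 else 0) :=
        Finset.sum_congr rfl fun u _ => Fintype.sum_prod_type _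
    _ = ∑ u : Fin m, ∑ v : Fin m, (if u ≠ v then m - 2 else 0) := by
        refine Finset.sum_congr rfl fun u _ => Finset.sum_congr rfl fun v _ => ?_
        by_cases huv : u ≠ v
        · rw [if_pos huv]
          have step : ∀ w : Fin m, (if u ≠ v ∧ v ≠ w ∧ u ≠ w then 1 else 0) =
              (if v ≠ w ∧ u ≠ w then 1 else 0) := by
            intro w; split_ifs <;> tauto
          rw [Finset.sum_congr rfl fun w _ => step w]
          rw [show (∑ w : Fin m, if v ≠ w ∧ u ≠ w then 1 else 0) =
              ((univ : Finset (Fin m)).filter (fun w => v ≠ w ∧ u ≠ w)).card from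
              (Finset.card_filter _ _).symm]
          have hf : (univ : Finset (Fin m)).filter (fun w => v ≠ w ∧ u ≠ w) =
              univ \ {v, u} := by
            ext w
            simp only [Finset.mem_filter, Finset.mem_univ, true_and,
              Finset.mem_sdiff, Finset.mem_insert, Finset.mem_singleton, not_or]
            exact ⟨fun h => ⟨Ne.symm h.1, Ne.symm h.2⟩, fun h => ⟨Ne.symm h.1, Ne.symm h.2⟩⟩
          rw [hf, Finset.card_sdiff_of_subset (by simp)]
          simp only [Finset.card_univ, Fintype.card_fin]
          rw [Finset.card_insert_of_notMem (by simpa using huv.symm), Finset.card_singleton]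
        · rw [if_neg huv]
          have step : ∀ w : Fin m, (if u ≠ v ∧ v ≠ w ∧ u ≠ w then 1 else 0) = 0 := by
            intro w; split_ifs <;> tauto
          rw [Finset.sum_congr rfl fun w _ => step w, Finset.sum_const_zero]
    _ = ∑ u : Fin m, (m - 1) * (m - 2) := by
        refine Finset.sum_congr rfl fun u _ => ?_
        rw [← Finset.sum_filter, Finset.sum_const, smul_eq_mul]
        congr 1
        have hf : (univ : Finset (Fin m)).filter (fun v => u ≠ v) = univ \ {u} := by
          ext v; simp [eq_comm]
        rw [hf, Finset.card_sdiff_of_subset (by simp)]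
        simp
    _ = m * ((m - 1) * (m - 2)) := by
        rw [Finset.sum_const, smul_eq_mul]
        simp
    _ = m * (m - 1) * (m - 2) := by ring


lemma Lend_le_pred {m : ℕ} (x : ℕ → Fin m) {k : ℕ} (hk0 : 0 < k) (he : x (k-1) ≠ x k) :
    Lend x k ≤ k - 1 := by
  refine Lend_min x ⟨fun l hl => ?_, fun l hl => ?_⟩
  · simp only [Finset.mem_Ico] at hl
    have hl' : l = k - 1 := by omega
    subst hl'
    have h3 : k - 1 + 1 = k := by omega
    rw [h3]; exact he
  · simp only [Finset.mem_Ico] at hl; omega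

lemma distinct_card {n m : ℕ} (a b c : Fin n) (hab : a ≠ b) (hac : a ≠ c) (hbc : b ≠ c) :
    ((univ : Finset (Fin n → Fin m)).filter
      (fun y => y a ≠ y b ∧ y b ≠ y c ∧ y a ≠ y c)).card
      = m * (m-1) * (m-2) * m ^ (n-3) := by
  classical
  set s := (univ : Finset (Fin n → Fin m)).filter
    (fun y => y a ≠ y b ∧ y b ≠ y c ∧ y a ≠ y c) with hs
  set t := (univ : Finset (Fin m × Fin m × Fin m)).filter
    (fun q => q.1 ≠ q.2.1 ∧ q.2.1 ≠ q.2.2 ∧ q.1 ≠ q.2.2) with ht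
  have hmap : ∀ y ∈ s, (y a, y b, y c) ∈ t := by
    intro y hy
    simp only [hs, ht, Finset.mem_filter, Finset.mem_univ, true_and] at hy ⊢
    exact hy
  rw [Finset.card_eq_sum_card_fiberwise hmap]
  have hfib : ∀ q ∈ t, (s.filter (fun y => (y a, y b, y c) = q)).card = m ^ (n-3) := by
    intro q hq
    simp only [ht, Finset.mem_filter, Finset.mem_univ, true_and] at hq
    have heq : s.filter (fun y => (y a, y b, y c) = q) =
        (univ : Finset (Fin n → Fin m)).filter
          (fun y => y a = q.1 ∧ y b = q.2.1 ∧ y c = q.2.2) := by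
      ext y
      simp only [hs, Finset.mem_filter, Finset.mem_univ, true_and, Prod.ext_iff]
      constructor
      · rintro ⟨-, h⟩; exact h
      · rintro ⟨h1, h2, h3⟩
        exact ⟨⟨by rw [h1, h2]; exact hq.1, by rw [h2, h3]; exact hq.2.1,
          by rw [h1, h3]; exact hq.2.2⟩, h1, h2, h3⟩
    rw [heq, fiber_card a b c hab hac hbc]
  rw [Finset.sum_congr rfl hfib, Finset.sum_const, smul_eq_mul, triple_card]

/-- positions at which two maximal alternating segments overlap -/
def goodK {m : ℕ} (n : ℕ) (x : ℕ → Fin m) : Finset ℕ :=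
  (Finset.range n).filter (fun k => 0 < k ∧ k + 1 < n ∧
    x (k-1) ≠ x k ∧ x k ≠ x (k+1) ∧ x (k-1) ≠ x (k+1))

lemma sumLen_eq {m n : ℕ} (x : ℕ → Fin m) : sumLen n x = n + (goodK n x).card := by
  have h1 : sumLen n x =
      ∑ p ∈ altSegs n x, ((Finset.range n).filter (fun k => p.1 ≤ k ∧ k ≤ p.2)).card := by
    refine Finset.sum_congr rfl fun p hp => ?_
    have hp' : p.1 ≤ p.2 ∧ p.2 < n := by
      simp only [altSegs, Finset.mem_filter, Finset.mem_product, Finset.mem_range] at hp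
      exact ⟨hp.2.1, hp.1.2⟩
    have he : (Finset.range n).filter (fun k => p.1 ≤ k ∧ k ≤ p.2) = Finset.Icc p.1 p.2 := by
      ext l
      simp only [Finset.mem_filter, Finset.mem_range, Finset.mem_Icc]
      omega
    rw [he, Nat.card_Icc]
    omega
  rw [h1]
  have h2 : ∑ p ∈ altSegs n x, ((Finset.range n).filter (fun k => p.1 ≤ k ∧ k ≤ p.2)).card
      = ∑ k ∈ Finset.range n, ((altSegs n x).filter (fun p => p.1 ≤ k ∧ k ≤ p.2)).card := by
    simp only [Finset.card_filter]
    exact Finset.sum_comm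
  rw [h2]
  have h3 : ∀ k ∈ Finset.range n,
      ((altSegs n x).filter (fun p => p.1 ≤ k ∧ k ≤ p.2)).card =
      if 0 < k ∧ k + 1 < n ∧ x (k-1) ≠ x k ∧ x k ≠ x (k+1) ∧ x (k-1) ≠ x (k+1)
      then 2 else 1 := by
    intro k hk
    rw [Finset.mem_range] at hk
    rw [segs_through x hk]
    split_ifs with h
    · rw [Finset.card_insert_of_notMem, Finset.card_singleton]
      simp only [Finset.mem_singleton]
      intro hcontra
      have h1' := congrArg Prod.fst hcontra
      simp only at h1'
      have := Lend_le_pred x h.1 h.2.2.1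
      omega
    · exact Finset.card_singleton _
  rw [Finset.sum_congr rfl h3]
  have h4 : ∀ k ∈ Finset.range n,
      (if 0 < k ∧ k + 1 < n ∧ x (k-1) ≠ x k ∧ x k ≠ x (k+1) ∧ x (k-1) ≠ x (k+1)
        then 2 else 1)
      = 1 + (if 0 < k ∧ k + 1 < n ∧ x (k-1) ≠ x k ∧ x k ≠ x (k+1) ∧ x (k-1) ≠ x (k+1)
        then 1 else 0) := fun k _ => by split_ifs <;> rfl
  rw [Finset.sum_congr rfl h4, Finset.sum_add_distrib, Finset.sum_const, smul_eq_mul,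
    mul_one, Finset.card_range, ← Finset.card_filter]
  rfl

/-- For a uniformly random `x ∈ Z_m^n`, the expected value of the sum of the lengths of
the maximal alternating segments equals `n + (n-2)(m-1)(m-2)/m²`. -/
theorem stmt5 (n m : ℕ) (hn : 2 ≤ n) (hm : 2 ≤ m) :
    (∑ y : Fin n → Fin m, (sumLen n (extWord n (by omega) y) : ℝ)) / (m : ℝ) ^ n
      = (n : ℝ) + ((n : ℝ) - 2) * ((m : ℝ) - 1) * ((m : ℝ) - 2) / (m : ℝ) ^ 2 := by
  have hm0 : 0 < m := by omega
  have hptw : ∀ y : Fin n → Fin m,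
      sumLen n (extWord n (by omega : 0 < m) y)
        = n + (goodK n (extWord n (by omega) y)).card := fun y => sumLen_eq _
  have hval : ∀ (y : Fin n → Fin m) (j : ℕ) (hj : j < n),
      extWord n (by omega : 0 < m) y j = y ⟨j, hj⟩ := fun y j hj => dif_pos hj
  -- the total count
  have hS : (∑ y : Fin n → Fin m, sumLen n (extWord n (by omega : 0 < m) y))
      = m ^ n * n + (n - 2) * (m * (m-1) * (m-2) * m ^ (n-3)) := by
    rw [Finset.sum_congr rfl fun y _ => hptw y, Finset.sum_add_distrib,
      Finset.sum_const, smul_eq_mul, Finset.card_univ]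
    congr 1
    · congr 1
      rw [Fintype.card_fun, Fintype.card_fin, Fintype.card_fin]
    · -- sum of goodK-cards
      have hsw : ∑ y : Fin n → Fin m, (goodK n (extWord n (by omega : 0 < m) y)).card
          = ∑ k ∈ Finset.range n, ((univ : Finset (Fin n → Fin m)).filter
              (fun y => 0 < k ∧ k + 1 < n ∧
                extWord n (by omega : 0 < m) y (k-1) ≠ extWord n (by omega) y k ∧
                extWord n (by omega) y k ≠ extWord n (by omega) y (k+1) ∧
                extWord n (by omega) y (k-1) ≠ extWord n (by omega) y (k+1))).card := by
        simp only [goodK, Finset.card_filter]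
        exact Finset.sum_comm
      rw [hsw]
      have hterm : ∀ k ∈ Finset.range n,
          ((univ : Finset (Fin n → Fin m)).filter
            (fun y => 0 < k ∧ k + 1 < n ∧
              extWord n (by omega : 0 < m) y (k-1) ≠ extWord n (by omega) y k ∧
              extWord n (by omega) y k ≠ extWord n (by omega) y (k+1) ∧
              extWord n (by omega) y (k-1) ≠ extWord n (by omega) y (k+1))).card
          = if 0 < k ∧ k + 1 < n then m * (m-1) * (m-2) * m ^ (n-3) else 0 := by
        intro k hk
        rw [Finset.mem_range] at hk
        split_ifs with hstruct
        · obtain ⟨hk0, hkn⟩ := hstruct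
          have ha : k - 1 < n := by omega
          have hb : k < n := hk
          have hc : k + 1 < n := hkn
          have hfilter : ((univ : Finset (Fin n → Fin m)).filter
              (fun y => 0 < k ∧ k + 1 < n ∧
                extWord n (by omega : 0 < m) y (k-1) ≠ extWord n (by omega) y k ∧
                extWord n (by omega) y k ≠ extWord n (by omega) y (k+1) ∧
                extWord n (by omega) y (k-1) ≠ extWord n (by omega) y (k+1)))
              = ((univ : Finset (Fin n → Fin m)).filter
                (fun y => y ⟨k-1, ha⟩ ≠ y ⟨k, hb⟩ ∧ y ⟨k, hb⟩ ≠ y ⟨k+1, hc⟩ ∧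
                  y ⟨k-1, ha⟩ ≠ y ⟨k+1, hc⟩)) := by
            ext y
            simp only [Finset.mem_filter, Finset.mem_univ, true_and,
              hval y (k-1) ha, hval y k hb, hval y (k+1) hc]
            tauto
          rw [hfilter, distinct_card]
          · exact Fin.ne_of_val_ne (show k - 1 ≠ k by omega)
          · exact Fin.ne_of_val_ne (show k - 1 ≠ k + 1 by omega)
          · exact Fin.ne_of_val_ne (show k ≠ k + 1 by omega)
        · rw [Finset.card_eq_zero, Finset.filter_eq_empty_iff]
          intro y _
          tauto
      rw [Finset.sum_congr rfl hterm, ← Finset.sum_filter, Finset.sum_const, smul_eq_mul]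
      congr 1
      have : (Finset.range n).filter (fun k => 0 < k ∧ k + 1 < n) = Finset.Ico 1 (n-1) := by
        ext k
        simp only [Finset.mem_filter, Finset.mem_range, Finset.mem_Ico]
        omega
      rw [this, Nat.card_Ico]
      omega
  -- fix the power
  have hfix : (n - 2) * (m * (m-1) * (m-2) * m ^ (n-3))
      = (n - 2) * ((m-1) * (m-2) * m ^ (n-2)) := by
    rcases Nat.lt_or_ge n 3 with h | h
    · have h2 : n - 2 = 0 := by omega
      simp [h2]
    · have h2 : m ^ (n-2) = m * m ^ (n-3) := by
        rw [← pow_succ']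
        congr 1
        omega
      rw [h2]; ring
  rw [← Nat.cast_sum, hS, hfix]
  have hmR : (m : ℝ) ≠ 0 := by positivity
  have hpow : (m : ℝ) ^ n = (m : ℝ) ^ (n-2) * (m : ℝ) ^ 2 := by
    rw [← pow_add]
    congr 1
    omega
  push_cast [Nat.cast_sub (show 2 ≤ n from hn), Nat.cast_sub (show 2 ≤ m from hm),
    Nat.cast_sub (show 1 ≤ m by omega)]
  rw [hpow]
  have h2 : (m : ℝ) ^ (n-2) ≠ 0 := by positivity
  field_simp
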